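/- The volume (Lebesgue measure) of the trace nonnegative polytope T^n = { x ∈ ℝ^n : ‖x‖_∞ ≤ 1 and 1 + ∑_{i=1}^n x_i ≥ 0 } equals 2^n · (1 - (1/n!) · ∑_{k=0}^{⌊(n-1)/2⌋} (-1)^k · C(n,k) · ((n-1)/2 - k)^n ). -/

import Mathlib

open MeasureTheory Finset Pointwise



lemma abs_max_zero_le (u : ℝ) : |max u 0| ≤ |u| := by
  rcases le_total u 0 with h | h
  · simp [max_eq_right h]
  · simp [max_eq_left h, abs_of_nonneg h]

lemma hasDerivAt_maxpow (n : ℕ) (hn : 1 ≤ n) (s : ℝ) :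
    HasDerivAt (fun u : ℝ => max u 0 ^ (n + 1)) ((n + 1 : ℝ) * max s 0 ^ n) s := by
  have hne : n ≠ 0 := Nat.one_le_iff_ne_zero.mp hn
  rcases lt_trichotomy s 0 with h | h | h
  · have heq : (fun u : ℝ => max u 0 ^ (n + 1)) =ᶠ[nhds s] fun _ => (0:ℝ) ^ (n+1) := by
      filter_upwards [Iio_mem_nhds h] with u hu
      rw [max_eq_right (le_of_lt hu)]
    rw [show max s 0 = 0 from max_eq_right h.le, zero_pow hne, mul_zero]
    simpa using (hasDerivAt_const s ((0:ℝ)^(n+1))).congr_of_eventuallyEq heq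
  · subst h
    rw [show max (0:ℝ) 0 = 0 from max_self 0, zero_pow hne, mul_zero,
      hasDerivAt_iff_tendsto_slope]
    have hb : ∀ u : ℝ, u ≠ 0 → |slope (fun u : ℝ => max u 0 ^ (n + 1)) 0 u| ≤ |u| ^ n := by
      intro u hu
      rw [slope_def_field]
      simp only [max_self, zero_pow (Nat.succ_ne_zero n), sub_zero]
      rw [abs_div, div_le_iff₀ (abs_pos.mpr hu)]
      calc |max u 0 ^ (n+1)| = |max u 0| ^ (n+1) := abs_pow _ _
        _ ≤ |u| ^ (n+1) := pow_le_pow_left₀ (abs_nonneg _) (abs_max_zero_le u) _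
        _ = |u| ^ n * |u| := by ring
    have htend : Filter.Tendsto (fun u : ℝ => |u| ^ n) (nhdsWithin 0 {(0:ℝ)}ᶜ) (nhds 0) := by
      have h2 : Filter.Tendsto (fun u : ℝ => |u| ^ n) (nhds 0) (nhds 0) := by
        have := ((continuous_abs.pow n).tendsto (0:ℝ))
        convert this using 2 <;> simp [Pi.pow_apply, zero_pow hne]
      exact h2.mono_left nhdsWithin_le_nhds
    apply squeeze_zero_norm' _ htend
    filter_upwards [self_mem_nhdsWithin] with u hu
    exact hb u hu
  · have heq : (fun u : ℝ => max u 0 ^ (n + 1)) =ᶠ[nhds s] fun u => u ^ (n+1) := by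
      filter_upwards [Ioi_mem_nhds h] with u hu
      rw [max_eq_left (le_of_lt hu)]
    have h2 := (hasDerivAt_pow (n+1) s).congr_of_eventuallyEq heq
    refine h2.congr_deriv ?_
    simp only [Nat.add_sub_cancel]
    rw [max_eq_left h.le]
    push_cast
    ring

lemma integral_maxpow (n : ℕ) (hn : 1 ≤ n) (a b : ℝ) :
    ∫ s in a..b, max s 0 ^ n = (max b 0 ^ (n + 1) - max a 0 ^ (n + 1)) / (n + 1) := by
  have hd : ∀ x ∈ Set.uIcc a b, HasDerivAt (fun u : ℝ => max u 0 ^ (n + 1) / (n+1))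
      (max x 0 ^ n) x := by
    intro x _
    have := (hasDerivAt_maxpow n hn x).div_const ((n:ℝ)+1)
    refine this.congr_deriv ?_
    exact mul_div_cancel_left₀ _ (by positivity)
  have h := intervalIntegral.integral_eq_sub_of_hasDerivAt hd
    (((continuous_id.max continuous_const).pow n).intervalIntegrable a b)
  rw [h]; ring


lemma sum_pascal_aux (n : ℕ) (A : ℕ → ℝ) :
    ∑ k ∈ range (n + 1), (-1 : ℝ) ^ k * (n.choose k : ℝ) * (A k - A (k + 1))
      = ∑ k ∈ range (n + 2), (-1 : ℝ) ^ k * ((n + 1).choose k : ℝ) * A k := by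
  have h1 : ∑ k ∈ range (n + 1), (-1:ℝ)^k * (n.choose k : ℝ) * A k
      = (∑ k ∈ range n, (-1:ℝ)^(k+1) * (n.choose (k+1) : ℝ) * A (k+1)) + A 0 := by
    rw [Finset.sum_range_succ']; simp
  have h2 : ∑ k ∈ range n, (-1:ℝ)^(k+1) * (n.choose (k+1) : ℝ) * A (k+1)
      = ∑ k ∈ range (n+1), (-1:ℝ)^(k+1) * (n.choose (k+1) : ℝ) * A (k+1) := by
    rw [Finset.sum_range_succ, Nat.choose_succ_self]; simp
  have hrhs : ∑ k ∈ range (n + 2), (-1 : ℝ) ^ k * ((n + 1).choose k : ℝ) * A k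
      = (∑ k ∈ range (n+1), (-1:ℝ)^(k+1) * ((n+1).choose (k+1) : ℝ) * A (k+1)) + A 0 := by
    rw [Finset.sum_range_succ']; simp
  have hpascal : ∑ k ∈ range (n+1), (-1:ℝ)^(k+1) * ((n+1).choose (k+1) : ℝ) * A (k+1)
      = ∑ k ∈ range (n+1), ((-1:ℝ)^(k+1) * (n.choose k : ℝ) * A (k+1)
          + (-1:ℝ)^(k+1) * (n.choose (k+1) : ℝ) * A (k+1)) := by
    refine Finset.sum_congr rfl fun k _ => ?_
    rw [Nat.choose_succ_succ]
    push_cast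
    ring
  rw [hrhs, hpascal, Finset.sum_add_distrib, ← h2]
  have hlhs : ∑ k ∈ range (n + 1), (-1 : ℝ) ^ k * (n.choose k : ℝ) * (A k - A (k + 1))
      = (∑ k ∈ range (n+1), (-1:ℝ)^k * (n.choose k : ℝ) * A k)
        - ∑ k ∈ range (n+1), (-1:ℝ)^k * (n.choose k : ℝ) * A (k+1) := by
    rw [← Finset.sum_sub_distrib]
    refine Finset.sum_congr rfl fun k _ => by ring
  rw [hlhs, h1]
  have : ∑ k ∈ range (n+1), (-1:ℝ)^(k+1) * (n.choose k : ℝ) * A (k+1)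
      = -∑ k ∈ range (n+1), (-1:ℝ)^k * (n.choose k : ℝ) * A (k+1) := by
    rw [← Finset.sum_neg_distrib]
    refine Finset.sum_congr rfl fun k _ => by ring
  rw [this]
  ring


noncomputable def gih (n : ℕ) (t : ℝ) : ℝ :=
  (n.factorial : ℝ)⁻¹ * ∑ k ∈ Finset.range (n + 1),
    (-1 : ℝ) ^ k * (n.choose k : ℝ) * max (t - k) 0 ^ n

lemma gih_continuous (n : ℕ) : Continuous (gih n) := by
  unfold gih
  exact continuous_const.mul (continuous_finset_sum _ fun k _ =>
    continuous_const.mul (((continuous_id.sub continuous_const).max continuous_const).pow n))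



lemma gih_rec (n : ℕ) (hn : 1 ≤ n) (t : ℝ) :
    ∫ y in (0:ℝ)..1, gih n (t - y) = gih (n + 1) t := by
  have hint : ∀ k ∈ range (n+1), IntervalIntegrable
      (fun y : ℝ => (-1:ℝ)^k * (n.choose k : ℝ) * max (t - y - k) 0 ^ n) volume 0 1 :=
    fun k _ => (continuous_const.mul ((((continuous_const.sub continuous_id).sub
      continuous_const).max continuous_const).pow n)).intervalIntegrable 0 1
  have step1 : ∫ y in (0:ℝ)..1, gih n (t - y)
      = (n.factorial : ℝ)⁻¹ * ∑ k ∈ range (n+1),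
          (-1:ℝ)^k * (n.choose k : ℝ) * ∫ y in (0:ℝ)..1, max ((t - k) - y) 0 ^ n := by
    simp only [gih]
    rw [intervalIntegral.integral_const_mul]
    congr 1
    rw [intervalIntegral.integral_finset_sum hint]
    refine Finset.sum_congr rfl fun k _ => ?_
    rw [intervalIntegral.integral_const_mul]
    congr 1
    refine intervalIntegral.integral_congr fun y _ => ?_
    ring_nf
  have step2 : ∀ k : ℕ, (∫ y in (0:ℝ)..1, max ((t - k) - y) 0 ^ n)
      = (max (t - k) 0 ^ (n+1) - max (t - (k+1:ℕ)) 0 ^ (n+1)) / (n+1) := by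
    intro k
    rw [intervalIntegral.integral_comp_sub_left (fun s => max s 0 ^ n) (t - k),
      integral_maxpow n hn]
    push_cast
    ring_nf
  rw [step1]
  have key := sum_pascal_aux n (fun k => max (t - k) 0 ^ (n+1))
  simp only [step2]
  have : ∑ k ∈ range (n+1), (-1:ℝ)^k * (n.choose k : ℝ)
        * ((max (t - k) 0 ^ (n+1) - max (t - (k+1:ℕ)) 0 ^ (n+1)) / (n+1))
      = (∑ k ∈ range (n+2), (-1:ℝ)^k * ((n+1).choose k : ℝ) * max (t - k) 0 ^ (n+1)) / (n+1) := by
    rw [← key, Finset.sum_div]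
    refine Finset.sum_congr rfl fun k _ => ?_
    push_cast
    ring
  rw [this, gih, Nat.factorial_succ]
  push_cast
  rw [mul_inv]
  ring




lemma gih_one (t : ℝ) : gih 1 t = max t 0 - max (t - 1) 0 := by
  simp [gih, Finset.sum_range_succ]
  ring

lemma gih_nonneg (n : ℕ) (hn : 1 ≤ n) (t : ℝ) : 0 ≤ gih n t := by
  induction n, hn using Nat.le_induction generalizing t with
  | base =>
    rw [gih_one, sub_nonneg]
    exact max_le_max (by linarith) le_rfl
  | succ n hn ih =>
    rw [← gih_rec n hn t]
    exact intervalIntegral.integral_nonneg zero_le_one fun u _ => ih (t - u)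

lemma measurableSet_S (n : ℕ) (t : ℝ) :
    MeasurableSet {y : Fin n → ℝ | (∀ i, y i ∈ Set.Icc (0:ℝ) 1) ∧ ∑ i, y i ≤ t} := by
  have h1 : MeasurableSet {y : Fin n → ℝ | ∀ i, y i ∈ Set.Icc (0:ℝ) 1} := by
    have : {y : Fin n → ℝ | ∀ i, y i ∈ Set.Icc (0:ℝ) 1}
        = Set.pi Set.univ (fun _ : Fin n => Set.Icc (0:ℝ) 1) := by
      ext y; simp [Set.mem_pi, Pi.le_def, forall_and]
    rw [this]
    exact MeasurableSet.univ_pi fun _ => measurableSet_Icc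
  have h2 : MeasurableSet {y : Fin n → ℝ | ∑ i, y i ≤ t} :=
    measurableSet_le (by fun_prop) measurable_const
  exact h1.inter h2

lemma volume_S (n : ℕ) (hn : 1 ≤ n) (t : ℝ) :
    volume {y : Fin n → ℝ | (∀ i, y i ∈ Set.Icc (0:ℝ) 1) ∧ ∑ i, y i ≤ t}
      = ENNReal.ofReal (gih n t) := by
  induction n, hn using Nat.le_induction generalizing t with
  | base =>
    have hset : {y : Fin 1 → ℝ | (∀ i, y i ∈ Set.Icc (0:ℝ) 1) ∧ ∑ i, y i ≤ t}
        = Set.pi Set.univ (fun _ : Fin 1 => Set.Icc (0:ℝ) 1 ∩ Set.Iic t) := by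
      ext y
      simp only [Set.mem_setOf_eq, Set.mem_pi, Set.mem_univ, forall_true_left,
        Set.mem_inter_iff, Set.mem_Icc, Set.mem_Iic, Fin.forall_fin_one, Fin.sum_univ_one]
    rw [hset, volume_pi_pi, Fin.prod_univ_one]
    have hicc : Set.Icc (0:ℝ) 1 ∩ Set.Iic t = Set.Icc 0 (min 1 t) := by
      ext x
      simp only [Set.mem_inter_iff, Set.mem_Icc, Set.mem_Iic, le_min_iff]
      tauto
    rw [hicc, Real.volume_Icc, gih_one, sub_zero]
    rcases le_total t 0 with h | h
    · rw [ENNReal.ofReal_of_nonpos (by simpa using Or.inr h),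
        ENNReal.ofReal_of_nonpos (by rw [max_eq_right h, max_eq_right (by linarith)]; norm_num)]
    · rcases le_total t 1 with h' | h'
      · congr 1
        rw [min_eq_right h', max_eq_left h, max_eq_right (by linarith)]; ring
      · congr 1
        rw [min_eq_left h', max_eq_left h, max_eq_left (by linarith)]; ring
  | succ n hn ih =>
    set S := {y : Fin (n+1) → ℝ | (∀ i, y i ∈ Set.Icc (0:ℝ) 1) ∧ ∑ i, y i ≤ t} with hS
    have hSmeas := measurableSet_S (n+1) t
    set e := MeasurableEquiv.piFinSuccAbove (fun _ : Fin (n+1) => ℝ) 0 with he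
    have hmp := (MeasureTheory.measurePreserving_piFinSuccAbove
      (fun _ : Fin (n+1) => (volume : Measure ℝ)) 0).symm
    have hstep : volume S
        = ((volume : Measure ℝ).prod (Measure.pi fun _ : Fin n => volume)) (e.symm ⁻¹' S) := by
      rw [volume_pi, ← hmp.map_eq, Measure.map_apply e.symm.measurable hSmeas]
    have hslice : ∀ a : ℝ, (Prod.mk a ⁻¹' (e.symm ⁻¹' S))
        = if a ∈ Set.Icc (0:ℝ) 1 then
            {z : Fin n → ℝ | (∀ i, z i ∈ Set.Icc (0:ℝ) 1) ∧ ∑ i, z i ≤ t - a} else ∅ := by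
      intro a
      ext z
      have hins : e.symm (a, z) = Fin.cons a z := by
        simp [he, MeasurableEquiv.piFinSuccAbove, Fin.insertNth_zero, Fin.consEquiv]
      simp only [Set.mem_preimage, hS, Set.mem_setOf_eq, hins, Fin.forall_fin_succ,
        Fin.cons_zero, Fin.cons_succ, Fin.sum_cons]
      by_cases ha : a ∈ Set.Icc (0:ℝ) 1
      · simp only [if_pos ha, Set.mem_setOf_eq]
        constructor
        · rintro ⟨⟨_, h2⟩, h3⟩; exact ⟨h2, by linarith⟩
        · rintro ⟨h2, h3⟩; exact ⟨⟨ha, h2⟩, by linarith⟩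
      · simp only [if_neg ha, Set.mem_empty_iff_false, iff_false]
        rintro ⟨⟨h1, _⟩, _⟩; exact ha h1
    rw [hstep, Measure.prod_apply (hSmeas.preimage e.symm.measurable)]
    have hvol : ∀ a : ℝ, (Measure.pi fun _ : Fin n => (volume : Measure ℝ))
        (Prod.mk a ⁻¹' (e.symm ⁻¹' S))
        = Set.indicator (Set.Icc (0:ℝ) 1) (fun a => ENNReal.ofReal (gih n (t - a))) a := by
      intro a
      rw [hslice a]
      by_cases ha : a ∈ Set.Icc (0:ℝ) 1
      · rw [if_pos ha, Set.indicator_of_mem ha, ← volume_pi, ih (t - a)]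
      · rw [if_neg ha, Set.indicator_of_notMem ha, measure_empty]
    refine (lintegral_congr hvol).trans ?_
    rw [lintegral_indicator measurableSet_Icc]
    rw [← MeasureTheory.ofReal_integral_eq_lintegral_ofReal]
    · rw [MeasureTheory.integral_Icc_eq_integral_Ioc,
        ← intervalIntegral.integral_of_le zero_le_one, gih_rec n hn t]
    · exact ((gih_continuous n).comp (continuous_const.sub continuous_id)).integrableOn_Icc
    · exact Filter.Eventually.of_forall fun a => gih_nonneg n hn (t - a)




/-- The volume of the trace nonnegative polytope `T^n` equals
`2^n * (1 - (1/n!) * ∑_{k=0}^{⌊(n-1)/2⌋} (-1)^k C(n,k) ((n-1)/2 - k)^n)`. -/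
theorem volume_trace_nonneg_polytope (n : ℕ) (hn : 1 ≤ n) :
    volume {x : Fin n → ℝ | (∀ i, |x i| ≤ 1) ∧ 0 ≤ 1 + ∑ i, x i} =
      ENNReal.ofReal (2 ^ n * (1 - (1 / (n.factorial : ℝ)) *
        ∑ k ∈ Finset.range ((n - 1) / 2 + 1),
          (-1 : ℝ) ^ k * (n.choose k : ℝ) * (((n : ℝ) - 1) / 2 - (k : ℝ)) ^ n)) := by
  set τ : ℝ := ((n : ℝ) - 1) / 2 with hτ
  set C : Set (Fin n → ℝ) := {x | ∀ i, |x i| ≤ 1} with hC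
  set B : Set (Fin n → ℝ) := C ∩ {x | ∑ i, x i < -1} with hB
  set B' : Set (Fin n → ℝ) := {x | (∀ i, x i ∈ Set.Icc (-1:ℝ) 1) ∧ ∑ i, x i ≤ -1} with hB'
  -- volume of the cube
  have hCvol : volume C = ENNReal.ofReal (2 ^ n) := by
    have : C = Set.pi Set.univ (fun _ : Fin n => Set.Icc (-1:ℝ) 1) := by
      ext x; simp [hC, Set.mem_pi, abs_le, Pi.le_def, forall_and]
    rw [this, volume_pi_pi]
    simp only [Real.volume_Icc]
    rw [Finset.prod_const, Finset.card_univ, Fintype.card_fin,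
      ← ENNReal.ofReal_pow (by norm_num : (0:ℝ) ≤ 1 - (-1))]
    norm_num
  -- the hyperplane is null
  have hHnull : volume {x : Fin n → ℝ | ∑ i, x i = -1} = 0 := by
    set L : (Fin n → ℝ) →ₗ[ℝ] ℝ := ∑ i : Fin n, LinearMap.proj i with hL
    have hLapp : ∀ x : Fin n → ℝ, L x = ∑ i, x i := by
      intro x; simp [hL, LinearMap.sum_apply]
    have hK : (LinearMap.ker L : Submodule ℝ (Fin n → ℝ)) ≠ ⊤ := by
      intro h
      have h1 : ((fun _ => 1 : Fin n → ℝ)) ∈ LinearMap.ker L := h ▸ Submodule.mem_top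
      rw [LinearMap.mem_ker, hLapp] at h1
      simp at h1
      omega
    have hK0 : volume ((LinearMap.ker L : Submodule ℝ (Fin n → ℝ)) : Set (Fin n → ℝ)) = 0 :=
      Measure.addHaar_submodule volume _ hK
    set c : Fin n → ℝ := fun _ => -1 / (n : ℝ) with hc
    have hcL : ∑ i, c i = -1 := by
      have hn0 : (n : ℝ) ≠ 0 := Nat.cast_ne_zero.mpr (by omega)
      simp [hc]
      field_simp
    have hset : {x : Fin n → ℝ | ∑ i, x i = -1}
        = c +ᵥ ((LinearMap.ker L : Submodule ℝ (Fin n → ℝ)) : Set (Fin n → ℝ)) := by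
      ext x
      rw [Set.mem_vadd_set_iff_neg_vadd_mem]
      simp only [SetLike.mem_coe, LinearMap.mem_ker, hLapp, Set.mem_setOf_eq, vadd_eq_add,
        Pi.add_apply, Pi.neg_apply]
      rw [Finset.sum_add_distrib]
      rw [show ∑ i, -c i = 1 by rw [Finset.sum_neg_distrib, hcL]; ring]
      constructor <;> intro h <;> linarith
    rw [hset, measure_vadd, hK0]
  -- B' via affine image
  have hB'vol : volume B' = ENNReal.ofReal (2 ^ n * gih n τ) := by
    set S' : Set (Fin n → ℝ) := {y | (∀ i, y i ∈ Set.Icc (0:ℝ) 1) ∧ ∑ i, y i ≤ τ} with hS'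
    have himg : B' = (fun _ => (-1:ℝ) : Fin n → ℝ) +ᵥ ((2:ℝ) • S') := by
      ext x
      rw [Set.mem_vadd_set_iff_neg_vadd_mem,
        Set.mem_smul_set_iff_inv_smul_mem₀ (by norm_num : (2:ℝ) ≠ 0)]
      simp only [hS', hB', Set.mem_setOf_eq, Pi.smul_apply, vadd_eq_add, Pi.add_apply,
        Pi.neg_apply, smul_eq_mul, Set.mem_Icc]
      have hsum : ∑ i, 2⁻¹ * (-(fun _ => (-1:ℝ)) i + x i) = (∑ i, x i + n) / 2 := by
        simp only [Pi.neg_apply]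
        rw [← Finset.mul_sum, Finset.sum_add_distrib, Finset.sum_const, Finset.card_univ,
          Fintype.card_fin]
        push_cast
        ring
      rw [hsum]
      constructor
      · rintro ⟨h1, h2⟩
        refine ⟨fun i => ?_, by rw [hτ]; linarith⟩
        have := h1 i
        constructor <;> [linarith [this.1]; linarith [this.2]]
      · rintro ⟨h1, h2⟩
        rw [hτ] at h2
        refine ⟨fun i => ?_, by linarith⟩
        have := h1 i
        constructor <;> [linarith [this.1]; linarith [this.2]]
    rw [himg, measure_vadd, Measure.addHaar_smul, volume_S n hn τ, Module.finrank_pi,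
      Fintype.card_fin, ← ENNReal.ofReal_mul (by positivity)]
    congr 1
    rw [abs_of_nonneg (by positivity)]
  -- B and B' agree up to the null hyperplane
  have hBB' : volume B = volume B' := by
    apply le_antisymm
    · apply measure_mono
      intro x hx
      rcases hx with ⟨hx1, hx2⟩
      exact ⟨fun i => abs_le.mp (hx1 i), le_of_lt hx2⟩
    · calc volume B' ≤ volume (B ∪ {x : Fin n → ℝ | ∑ i, x i = -1}) := by
            apply measure_mono
            rintro x ⟨h1, h2⟩
            rcases lt_or_eq_of_le h2 with h | h
            · exact Or.inl ⟨fun i => abs_le.mpr (h1 i), h⟩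
            · exact Or.inr h
        _ ≤ volume B + volume {x : Fin n → ℝ | ∑ i, x i = -1} := measure_union_le _ _
        _ = volume B := by rw [hHnull, add_zero]
  -- A = C \ B
  have hA : {x : Fin n → ℝ | (∀ i, |x i| ≤ 1) ∧ 0 ≤ 1 + ∑ i, x i} = C \ B := by
    ext x
    simp only [Set.mem_setOf_eq, Set.mem_diff, hB, hC, Set.mem_inter_iff, Set.mem_setOf_eq,
      not_and, not_lt]
    constructor
    · rintro ⟨h1, h2⟩; exact ⟨h1, fun _ => by linarith⟩
    · rintro ⟨h1, h2⟩; exact ⟨h1, by linarith [h2 h1]⟩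
  -- measurability of B
  have hBm : MeasurableSet B := by
    have h1 : MeasurableSet C := by
      have : C = Set.pi Set.univ (fun _ : Fin n => Set.Icc (-1:ℝ) 1) := by
        ext x; simp [hC, Set.mem_pi, abs_le, Pi.le_def, forall_and]
      rw [this]; exact MeasurableSet.univ_pi fun _ => measurableSet_Icc
    exact h1.inter (measurableSet_lt (by fun_prop) measurable_const)
  have hBfin : volume B ≠ ⊤ := by
    rw [hBB', hB'vol]; exact ENNReal.ofReal_ne_top
  -- put it together
  rw [hA, measure_diff (by rw [hB]; exact Set.inter_subset_left) hBm.nullMeasurableSet hBfin,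
    hCvol, hBB', hB'vol, ← ENNReal.ofReal_sub _ (mul_nonneg (by positivity) (gih_nonneg n hn τ))]
  congr 1
  have hgih : gih n τ = (1 / (n.factorial : ℝ)) *
      ∑ k ∈ Finset.range ((n - 1) / 2 + 1),
        (-1 : ℝ) ^ k * (n.choose k : ℝ) * (τ - (k : ℝ)) ^ n := by
    rw [gih, one_div]
    congr 1
    rw [← Finset.sum_subset (Finset.range_subset_range.mpr (by omega :
        (n - 1) / 2 + 1 ≤ n + 1))]
    · refine Finset.sum_congr rfl fun k hk => ?_
      rw [Finset.mem_range] at hk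
      have hk2 : 2 * k ≤ n - 1 := by omega
      have : (k : ℝ) ≤ τ := by
        rw [hτ]
        have : (2 * k : ℝ) ≤ ((n - 1 : ℕ) : ℝ) := by exact_mod_cast hk2
        rw [Nat.cast_sub hn] at this
        push_cast at this ⊢
        linarith
      rw [max_eq_left (by linarith)]
    · intro k hk1 hk2
      rw [Finset.mem_range] at hk1 hk2
      push_neg at hk2
      have : τ - k < 0 := by
        rw [hτ]
        have h2 : (n:ℝ) - 1 < 2 * k := by
          have : n - 1 < 2 * k := by omega
          have := (Nat.cast_lt (α := ℝ)).mpr this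
          rw [Nat.cast_sub hn] at this
          push_cast at this ⊢
          linarith
        linarith
      rw [max_eq_right (by linarith), zero_pow (by omega : n ≠ 0), mul_zero]
  rw [hgih]
  ring
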